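/- Loss comparison for threshold predictors: let y, z : I → [0,1] be distributions on a finite set I (Σ y = 1, Σ z ≤ 1) and ℓ : I × Y → [0,1] a loss over a finite action set Y. Let m minimize Σ_i y_i ℓ(i, a) over a ∈ Y and s minimize Σ_i z_i ℓ(i, a) over a ∈ Y. Then (sqrt(Σ_i y_i ℓ(i,s)) − sqrt(Σ_i y_i ℓ(i,m)))^2 ≤ 2 Σ_i (sqrt(y_i) − sqrt(z_i))^2. -/

import Mathlib

theorem loss_bound_threshold_predictors
    {I Y : Type*} [Fintype I] [Fintype Y] [Nonempty I] [Nonempty Y]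
    (y z : I → ℝ) (ℓ : I → Y → ℝ)
    (hy0 : ∀ i, 0 ≤ y i) (hy1 : ∀ i, y i ≤ 1) (hysum : ∑ i, y i = 1)
    (hz0 : ∀ i, 0 ≤ z i) (hz1 : ∀ i, z i ≤ 1) (hzsum : ∑ i, z i ≤ 1)
    (hl0 : ∀ i a, 0 ≤ ℓ i a) (hl1 : ∀ i a, ℓ i a ≤ 1)
    (m s : Y)
    (hm : ∀ a, ∑ i, y i * ℓ i m ≤ ∑ i, y i * ℓ i a)
    (hs : ∀ a, ∑ i, z i * ℓ i s ≤ ∑ i, z i * ℓ i a) :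
    (Real.sqrt (∑ i, y i * ℓ i s) - Real.sqrt (∑ i, y i * ℓ i m)) ^ 2
      ≤ 2 * ∑ i, (Real.sqrt (y i) - Real.sqrt (z i)) ^ 2 := by
  classical
  set A := ∑ i, y i * ℓ i s with hAdef
  set B := ∑ i, y i * ℓ i m with hBdef
  set C := ∑ i, z i * ℓ i m with hCdef
  set Cs := ∑ i, z i * ℓ i s with hCsdef
  set h2 := ∑ i, (Real.sqrt (y i) - Real.sqrt (z i)) ^ 2 with hh2def
  have hA0 : 0 ≤ A := Finset.sum_nonneg fun i _ => mul_nonneg (hy0 i) (hl0 i s)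
  have hB0 : 0 ≤ B := Finset.sum_nonneg fun i _ => mul_nonneg (hy0 i) (hl0 i m)
  have hC0 : 0 ≤ C := Finset.sum_nonneg fun i _ => mul_nonneg (hz0 i) (hl0 i m)
  have hCs0 : 0 ≤ Cs := Finset.sum_nonneg fun i _ => mul_nonneg (hz0 i) (hl0 i s)
  have hh20 : 0 ≤ h2 := Finset.sum_nonneg fun i _ => sq_nonneg _
  have hBA : B ≤ A := hm s
  have hCsC : Cs ≤ C := hs m
  set t := Real.sqrt A with htdef
  set b := Real.sqrt B with hbdef
  set c := Real.sqrt C with hcdef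
  have ht0 : 0 ≤ t := Real.sqrt_nonneg _
  have hb0 : 0 ≤ b := Real.sqrt_nonneg _
  have hc0 : 0 ≤ c := Real.sqrt_nonneg _
  have ht2 : t ^ 2 = A := Real.sq_sqrt hA0
  have hb2 : b ^ 2 = B := Real.sq_sqrt hB0
  have hc2 : c ^ 2 = C := Real.sq_sqrt hC0
  -- cross terms
  set S1 := ∑ i, Real.sqrt (y i) * Real.sqrt (z i) * ℓ i s with hS1def
  set S2 := ∑ i, Real.sqrt (y i) * Real.sqrt (z i) * ℓ i m with hS2def
  have hS10 : 0 ≤ S1 := Finset.sum_nonneg fun i _ =>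
    mul_nonneg (mul_nonneg (Real.sqrt_nonneg _) (Real.sqrt_nonneg _)) (hl0 i s)
  have hS20 : 0 ≤ S2 := Finset.sum_nonneg fun i _ =>
    mul_nonneg (mul_nonneg (Real.sqrt_nonneg _) (Real.sqrt_nonneg _)) (hl0 i m)
  -- Cauchy-Schwarz for the cross terms
  have hS1 : S1 ≤ t * c := by
    have h := Real.sum_mul_le_sqrt_mul_sqrt (Finset.univ : Finset I)
      (fun i => Real.sqrt (y i) * Real.sqrt (ℓ i s))
      (fun i => Real.sqrt (z i) * Real.sqrt (ℓ i s))
    have e1 : ∀ i : I, (Real.sqrt (y i) * Real.sqrt (ℓ i s)) *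
        (Real.sqrt (z i) * Real.sqrt (ℓ i s)) = Real.sqrt (y i) * Real.sqrt (z i) * ℓ i s := by
      intro i
      have hll : Real.sqrt (ℓ i s) * Real.sqrt (ℓ i s) = ℓ i s := Real.mul_self_sqrt (hl0 i s)
      calc (Real.sqrt (y i) * Real.sqrt (ℓ i s)) * (Real.sqrt (z i) * Real.sqrt (ℓ i s))
          = Real.sqrt (y i) * Real.sqrt (z i) * (Real.sqrt (ℓ i s) * Real.sqrt (ℓ i s)) := by
            ring
        _ = Real.sqrt (y i) * Real.sqrt (z i) * ℓ i s := by rw [hll]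
    have e2 : ∀ i : I, (Real.sqrt (y i) * Real.sqrt (ℓ i s)) ^ 2 = y i * ℓ i s := by
      intro i; rw [mul_pow, Real.sq_sqrt (hy0 i), Real.sq_sqrt (hl0 i s)]
    have e3 : ∀ i : I, (Real.sqrt (z i) * Real.sqrt (ℓ i s)) ^ 2 = z i * ℓ i s := by
      intro i; rw [mul_pow, Real.sq_sqrt (hz0 i), Real.sq_sqrt (hl0 i s)]
    rw [Finset.sum_congr rfl (fun i _ => e1 i), Finset.sum_congr rfl (fun i _ => e2 i),
      Finset.sum_congr rfl (fun i _ => e3 i)] at h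
    calc S1 ≤ Real.sqrt A * Real.sqrt Cs := h
      _ ≤ t * c := mul_le_mul_of_nonneg_left (Real.sqrt_le_sqrt hCsC) ht0
  have hS2 : S2 ≤ b * c := by
    have h := Real.sum_mul_le_sqrt_mul_sqrt (Finset.univ : Finset I)
      (fun i => Real.sqrt (y i) * Real.sqrt (ℓ i m))
      (fun i => Real.sqrt (z i) * Real.sqrt (ℓ i m))
    have e1 : ∀ i : I, (Real.sqrt (y i) * Real.sqrt (ℓ i m)) *
        (Real.sqrt (z i) * Real.sqrt (ℓ i m)) = Real.sqrt (y i) * Real.sqrt (z i) * ℓ i m := by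
      intro i
      have hll : Real.sqrt (ℓ i m) * Real.sqrt (ℓ i m) = ℓ i m := Real.mul_self_sqrt (hl0 i m)
      calc (Real.sqrt (y i) * Real.sqrt (ℓ i m)) * (Real.sqrt (z i) * Real.sqrt (ℓ i m))
          = Real.sqrt (y i) * Real.sqrt (z i) * (Real.sqrt (ℓ i m) * Real.sqrt (ℓ i m)) := by
            ring
        _ = Real.sqrt (y i) * Real.sqrt (z i) * ℓ i m := by rw [hll]
    have e2 : ∀ i : I, (Real.sqrt (y i) * Real.sqrt (ℓ i m)) ^ 2 = y i * ℓ i m := by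
      intro i; rw [mul_pow, Real.sq_sqrt (hy0 i), Real.sq_sqrt (hl0 i m)]
    have e3 : ∀ i : I, (Real.sqrt (z i) * Real.sqrt (ℓ i m)) ^ 2 = z i * ℓ i m := by
      intro i; rw [mul_pow, Real.sq_sqrt (hz0 i), Real.sq_sqrt (hl0 i m)]
    rw [Finset.sum_congr rfl (fun i _ => e1 i), Finset.sum_congr rfl (fun i _ => e2 i),
      Finset.sum_congr rfl (fun i _ => e3 i)] at h
    exact h
  -- division facts
  have hS1t : S1 / t ≤ c := by
    rcases eq_or_lt_of_le ht0 with h | h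
    · have htc : t * c = 0 := by rw [← h, zero_mul]
      have hS1z : S1 = 0 := le_antisymm (hS1.trans htc.le) hS10
      rw [hS1z, zero_div]; exact hc0
    · rw [div_le_iff₀ h]; linarith [hS1]
  have hS2c : S2 / c ≤ b := by
    rcases eq_or_lt_of_le hc0 with h | h
    · have hbc : b * c = 0 := by rw [← h, mul_zero]
      have hS2z : S2 = 0 := le_antisymm (hS2.trans hbc.le) hS20
      rw [hS2z, zero_div]; exact hb0
    · rw [div_le_iff₀ h]; linarith [hS2]
  have hAt : A / t = t := by
    rcases eq_or_lt_of_le ht0 with h | h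
    · have hA : A = 0 := by rw [← ht2, ← h]; norm_num
      rw [hA, ← h, zero_div]
    · rw [← ht2, sq, mul_div_assoc, div_self (ne_of_gt h), mul_one]
  have hCc : C / c = c := by
    rcases eq_or_lt_of_le hc0 with h | h
    · have hC : C = 0 := by rw [← hc2, ← h]; norm_num
      rw [hC, ← h, zero_div]
    · rw [← hc2, sq, mul_div_assoc, div_self (ne_of_gt h), mul_one]
  -- the key vector g
  set g : I → ℝ := fun i => Real.sqrt (y i) * ℓ i s / t - Real.sqrt (z i) * ℓ i m / c
    with hgdef
  have key1 : t - b ≤ ∑ i, (Real.sqrt (y i) - Real.sqrt (z i)) * g i := by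
    have expand : ∑ i, (Real.sqrt (y i) - Real.sqrt (z i)) * g i
        = A / t - S1 / t - S2 / c + C / c := by
      have e : ∀ i : I, (Real.sqrt (y i) - Real.sqrt (z i)) * g i
          = y i * ℓ i s / t - Real.sqrt (y i) * Real.sqrt (z i) * ℓ i s / t
            - Real.sqrt (y i) * Real.sqrt (z i) * ℓ i m / c
            + z i * ℓ i m / c := by
        intro i
        have hy' : Real.sqrt (y i) * Real.sqrt (y i) = y i := Real.mul_self_sqrt (hy0 i)
        have hz' : Real.sqrt (z i) * Real.sqrt (z i) = z i := Real.mul_self_sqrt (hz0 i)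
        simp only [hgdef]
        calc (Real.sqrt (y i) - Real.sqrt (z i)) *
              (Real.sqrt (y i) * ℓ i s / t - Real.sqrt (z i) * ℓ i m / c)
            = (Real.sqrt (y i) * Real.sqrt (y i)) * ℓ i s / t
              - Real.sqrt (y i) * Real.sqrt (z i) * ℓ i s / t
              - Real.sqrt (y i) * Real.sqrt (z i) * ℓ i m / c
              + (Real.sqrt (z i) * Real.sqrt (z i)) * ℓ i m / c := by ring
          _ = _ := by rw [hy', hz']
      rw [Finset.sum_congr rfl (fun i _ => e i)]
      simp only [Finset.sum_add_distrib, Finset.sum_sub_distrib, ← Finset.sum_div]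
      rfl
    rw [expand, hAt, hCc]
    linarith [hS1t, hS2c]
  have key2 : ∑ i, (Real.sqrt (y i) - Real.sqrt (z i)) * g i
      ≤ Real.sqrt h2 * Real.sqrt (∑ i, g i ^ 2) := by
    have h := Real.sum_mul_le_sqrt_mul_sqrt (Finset.univ : Finset I)
      (fun i => Real.sqrt (y i) - Real.sqrt (z i)) g
    rw [← hh2def] at h
    exact h
  have key3 : ∑ i, g i ^ 2 ≤ 2 := by
    have hterm : ∀ i : I, g i ^ 2
        ≤ (Real.sqrt (y i) * ℓ i s / t) ^ 2 + (Real.sqrt (z i) * ℓ i m / c) ^ 2 := by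
      intro i
      have hab : 0 ≤ (Real.sqrt (y i) * ℓ i s / t) * (Real.sqrt (z i) * ℓ i m / c) :=
        mul_nonneg (div_nonneg (mul_nonneg (Real.sqrt_nonneg _) (hl0 i s)) ht0)
          (div_nonneg (mul_nonneg (Real.sqrt_nonneg _) (hl0 i m)) hc0)
      simp only [hgdef]
      have expand2 : (Real.sqrt (y i) * ℓ i s / t - Real.sqrt (z i) * ℓ i m / c) ^ 2
          = (Real.sqrt (y i) * ℓ i s / t) ^ 2 + (Real.sqrt (z i) * ℓ i m / c) ^ 2
            - 2 * ((Real.sqrt (y i) * ℓ i s / t) * (Real.sqrt (z i) * ℓ i m / c)) := by ring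
      linarith [hab, expand2.le]
    have h1 : ∑ i, (Real.sqrt (y i) * ℓ i s / t) ^ 2 ≤ 1 := by
      rcases eq_or_lt_of_le ht0 with h | h
      · have : ∀ i : I, (Real.sqrt (y i) * ℓ i s / t) ^ 2 = 0 := by
          intro i; rw [← h, div_zero]; norm_num
        rw [Finset.sum_congr rfl (fun i _ => this i)]
        simp
      · have hA : 0 < A := ht2 ▸ pow_pos h 2
        have e : ∀ i : I, (Real.sqrt (y i) * ℓ i s / t) ^ 2 = y i * ℓ i s ^ 2 / A := by
          intro i; rw [div_pow, mul_pow, Real.sq_sqrt (hy0 i), ht2]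
        rw [Finset.sum_congr rfl (fun i _ => e i), ← Finset.sum_div, div_le_one hA]
        have : ∀ i : I, y i * ℓ i s ^ 2 ≤ y i * ℓ i s := by
          intro i
          have : ℓ i s ^ 2 ≤ ℓ i s := by
            rw [sq]; exact mul_le_of_le_one_left (hl0 i s) (hl1 i s)
          exact mul_le_mul_of_nonneg_left this (hy0 i)
        exact Finset.sum_le_sum fun i _ => this i
    have h2' : ∑ i, (Real.sqrt (z i) * ℓ i m / c) ^ 2 ≤ 1 := by
      rcases eq_or_lt_of_le hc0 with h | h
      · have : ∀ i : I, (Real.sqrt (z i) * ℓ i m / c) ^ 2 = 0 := by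
          intro i; rw [← h, div_zero]; norm_num
        rw [Finset.sum_congr rfl (fun i _ => this i)]
        simp
      · have hC : 0 < C := hc2 ▸ pow_pos h 2
        have e : ∀ i : I, (Real.sqrt (z i) * ℓ i m / c) ^ 2 = z i * ℓ i m ^ 2 / C := by
          intro i; rw [div_pow, mul_pow, Real.sq_sqrt (hz0 i), hc2]
        rw [Finset.sum_congr rfl (fun i _ => e i), ← Finset.sum_div, div_le_one hC]
        have : ∀ i : I, z i * ℓ i m ^ 2 ≤ z i * ℓ i m := by
          intro i
          have : ℓ i m ^ 2 ≤ ℓ i m := by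
            rw [sq]; exact mul_le_of_le_one_left (hl0 i m) (hl1 i m)
          exact mul_le_mul_of_nonneg_left this (hz0 i)
        exact Finset.sum_le_sum fun i _ => this i
    calc ∑ i, g i ^ 2
        ≤ ∑ i, ((Real.sqrt (y i) * ℓ i s / t) ^ 2 + (Real.sqrt (z i) * ℓ i m / c) ^ 2) :=
          Finset.sum_le_sum fun i _ => hterm i
      _ = (∑ i, (Real.sqrt (y i) * ℓ i s / t) ^ 2)
          + ∑ i, (Real.sqrt (z i) * ℓ i m / c) ^ 2 := Finset.sum_add_distrib
      _ ≤ 2 := by linarith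
  have htb : 0 ≤ t - b := sub_nonneg.2 (Real.sqrt_le_sqrt hBA)
  have key4 : t - b ≤ Real.sqrt h2 * Real.sqrt 2 :=
    (key1.trans key2).trans
      (mul_le_mul_of_nonneg_left (Real.sqrt_le_sqrt key3) (Real.sqrt_nonneg _))
  have hsq : (t - b) ^ 2 ≤ (Real.sqrt h2 * Real.sqrt 2) ^ 2 := pow_le_pow_left₀ htb key4 2
  have hfin : (Real.sqrt h2 * Real.sqrt 2) ^ 2 = 2 * h2 := by
    rw [mul_pow, Real.sq_sqrt hh20, Real.sq_sqrt (by norm_num : (0:ℝ) ≤ 2)]; ring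
  rw [hfin] at hsq
  exact hsq
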